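/- Let A be a countable subset of ℂ, and for each α ∈ A and each natural number s ≥ 0 let E_{α,s} be a dense subset of ℂ. Then the set of entire functions f : ℂ → ℂ which are not polynomials and satisfy f^(s)(α) ∈ E_{α,s} for every α ∈ A and every s ≥ 0 is uncountable. -/

import Mathlib

open Polynomial Filter Metric Set Finset
open scoped Topology

attribute [local instance 10] Classical.propDecidable

noncomputable section AuxBS
namespace AuxBS

variable (q : ℕ → ℂ)

/-- order of the k-th pair: number of previous occurrences of the same point -/
def mm (k : ℕ) : ℕ := Nat.count (fun j => q j = q k) k

lemma mm_lt {j k : ℕ} (hjk : j < k) (hq : q j = q k) : mm q j < mm q k := by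
  unfold mm
  simp only [hq]
  calc Nat.count (fun i => q i = q k) j
      < Nat.count (fun i => q i = q k) (j+1) := by
        rw [Nat.count_succ, if_pos hq]; omega
    _ ≤ Nat.count (fun i => q i = q k) k := Nat.count_monotone _ hjk

lemma mm_surj {α : ℂ} (hinf : {j | q j = α}.Infinite) (s : ℕ) :
    ∃ k, q k = α ∧ mm q k = s := by
  have hinf' : (setOf (fun j => q j = α)).Infinite := hinf
  refine ⟨Nat.nth (fun j => q j = α) s, Nat.nth_mem_of_infinite hinf' s, ?_⟩
  have hq : q (Nat.nth (fun j => q j = α) s) = α := Nat.nth_mem_of_infinite hinf' s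
  unfold mm
  simp only [hq]
  exact Nat.count_nth_of_infinite hinf' s

/-- the correction polynomial at step k -/
def G (k : ℕ) : ℂ[X] :=
  (X - C (q k)) ^ (mm q k) *
    ∏ j ∈ (Finset.range k).filter (fun j => q j ≠ q k), (X - C (q j)) ^ (mm q j + 1)

lemma G_ne_zero (k : ℕ) : G q k ≠ 0 := by
  apply mul_ne_zero (pow_ne_zero _ (X_sub_C_ne_zero _))
  exact Finset.prod_ne_zero_iff.2 fun j _ => pow_ne_zero _ (X_sub_C_ne_zero _)

lemma rootMultiplicity_G (k : ℕ) : rootMultiplicity (q k) (G q k) = mm q k := by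
  rw [G, rootMultiplicity_mul (by rw [← G]; exact G_ne_zero q k),
    rootMultiplicity_X_sub_C_pow]
  have : rootMultiplicity (q k)
      (∏ j ∈ (Finset.range k).filter (fun j => q j ≠ q k), (X - C (q j)) ^ (mm q j + 1)) = 0 := by
    apply rootMultiplicity_eq_zero
    simp only [IsRoot, eval_prod, eval_pow, eval_sub, eval_X, eval_C]
    refine Finset.prod_ne_zero_iff.2 fun j hj => pow_ne_zero _ ?_
    have : q j ≠ q k := (Finset.mem_filter.1 hj).2
    exact sub_ne_zero.2 (Ne.symm this)
  omega

lemma iterate_derivative_G_eval_zero {l k : ℕ} (h : l < k) :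
    ((derivative (R := ℂ))^[mm q l] (G q k)).eval (q l) = 0 := by
  apply isRoot_iterate_derivative_of_lt_rootMultiplicity
  have : (X - C (q l)) ^ (mm q l + 1) ∣ G q k := by
    by_cases hq : q l = q k
    · apply Dvd.dvd.mul_right
      rw [hq]
      exact pow_dvd_pow _ (mm_lt q h hq)
    · apply Dvd.dvd.mul_left
      exact Finset.dvd_prod_of_mem _ (Finset.mem_filter.2 ⟨Finset.mem_range.2 h, hq⟩)
  have := (le_rootMultiplicity_iff (G_ne_zero q k)).2 this
  omega

lemma dd_ne_zero (k : ℕ) : ((derivative (R := ℂ))^[mm q k] (G q k)).eval (q k) ≠ 0 := by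
  intro h
  have hroot : ∀ i ≤ mm q k, ((derivative (R := ℂ))^[i] (G q k)).IsRoot (q k) := by
    intro i hi
    rcases eq_or_lt_of_le hi with rfl | hlt
    · exact h
    · exact isRoot_iterate_derivative_of_lt_rootMultiplicity
        (by rw [rootMultiplicity_G]; exact hlt)
  have := lt_rootMultiplicity_of_isRoot_iterate_derivative_of_mem_nonZeroDivisors
    (G_ne_zero q k) hroot (mem_nonZeroDivisors_of_ne_zero
      (by exact_mod_cast (Nat.factorial_ne_zero _)))
  rw [rootMultiplicity_G] at this
  omega

/-- crude bound for `‖(G q k).eval z‖` on `‖z‖ ≤ R` -/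
def Gb (R : ℝ) (k : ℕ) : ℝ := ∏ j ∈ Finset.range (k+1), (R + ‖q j‖ + 1) ^ (mm q j + 1)

lemma Gb_nonneg {R : ℝ} (hR : 0 ≤ R) (k : ℕ) : 0 ≤ Gb q R k :=
  Finset.prod_nonneg fun j _ => pow_nonneg (by positivity) _

lemma Gb_mono {R R' : ℝ} (hR : 0 ≤ R) (h : R ≤ R') (k : ℕ) : Gb q R k ≤ Gb q R' k := by
  apply Finset.prod_le_prod (fun j _ => pow_nonneg (by positivity) _)
  intro j _
  apply pow_le_pow_left₀ (by positivity)
  linarith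

lemma eval_G_le {R : ℝ} (hR : 0 ≤ R) {z : ℂ} (hz : ‖z‖ ≤ R) (k : ℕ) :
    ‖(G q k).eval z‖ ≤ Gb q R k := by
  have hfac : ∀ j, ‖z - q j‖ ≤ R + ‖q j‖ + 1 := by
    intro j
    calc ‖z - q j‖ ≤ ‖z‖ + ‖q j‖ := norm_sub_le _ _
      _ ≤ R + ‖q j‖ + 1 := by linarith
  have hone : ∀ j, (1:ℝ) ≤ R + ‖q j‖ + 1 := fun j => by nlinarith [norm_nonneg (q j)]
  rw [G, eval_mul, eval_pow, eval_sub, eval_X, eval_C, norm_mul, norm_pow]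
  rw [Gb, Finset.prod_range_succ]
  rw [mul_comm (∏ x ∈ Finset.range k, (R + ‖q x‖ + 1) ^ (mm q x + 1))]
  have hA : ‖z - q k‖ ^ mm q k ≤ (R + ‖q k‖ + 1) ^ (mm q k + 1) := by
    calc ‖z - q k‖ ^ mm q k ≤ (R + ‖q k‖ + 1) ^ mm q k :=
          pow_le_pow_left₀ (norm_nonneg _) (hfac k) _
      _ ≤ (R + ‖q k‖ + 1) ^ (mm q k + 1) :=
          pow_le_pow_right₀ (hone k) (Nat.le_succ _)
  have hB : ‖eval z (∏ j ∈ filter (fun j => q j ≠ q k) (Finset.range k),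
      (X - C (q j)) ^ (mm q j + 1))‖ ≤ ∏ x ∈ Finset.range k, (R + ‖q x‖ + 1) ^ (mm q x + 1) := by
    rw [eval_prod, norm_prod]
    calc ∏ j ∈ filter (fun j => q j ≠ q k) (Finset.range k), ‖eval z ((X - C (q j)) ^ (mm q j + 1))‖
        ≤ ∏ j ∈ filter (fun j => q j ≠ q k) (Finset.range k), (R + ‖q j‖ + 1) ^ (mm q j + 1) := by
          apply Finset.prod_le_prod (fun j _ => norm_nonneg _)
          intro j _
          rw [eval_pow, eval_sub, eval_X, eval_C, norm_pow]
          exact pow_le_pow_left₀ (norm_nonneg _) (hfac j) _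
      _ ≤ ∏ x ∈ Finset.range k, (R + ‖q x‖ + 1) ^ (mm q x + 1) := by
          rw [← Finset.prod_filter_mul_prod_filter_not (Finset.range k) (fun j => q j ≠ q k)]
          have h1 : (1:ℝ) ≤ ∏ j ∈ filter (fun j => ¬ q j ≠ q k) (Finset.range k),
              (R + ‖q j‖ + 1) ^ (mm q j + 1) := by
            induction ((Finset.range k).filter (fun j => ¬ q j ≠ q k)) using Finset.cons_induction with
            | empty => simp
            | cons a s ha ih =>
              rw [Finset.prod_cons]
              exact one_le_mul_of_one_le_of_one_le (one_le_pow₀ (hone a)) ih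
          exact le_mul_of_one_le_right
            (Finset.prod_nonneg fun j _ => pow_nonneg (by positivity) _) h1
  exact mul_le_mul hA hB (norm_nonneg _) (le_trans zero_le_one (one_le_pow₀ (hone k)))


def eps (k : ℕ) : ℝ := (2:ℝ)⁻¹ ^ k / (Gb q k k + 1)

lemma eps_pos (k : ℕ) : 0 < eps q k := by
  apply div_pos (by positivity)
  have := Gb_nonneg q (by positivity : (0:ℝ) ≤ (k:ℝ)) k
  linarith

lemma eps_mul_Gb_le (k : ℕ) : eps q k * Gb q k k ≤ (2:ℝ)⁻¹ ^ k := by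
  rw [eps, div_mul_eq_mul_div, div_le_iff₀ (by
    have := Gb_nonneg q (by positivity : (0:ℝ) ≤ (k:ℝ)) k; linarith)]
  have h0 : (0:ℝ) ≤ (2:ℝ)⁻¹ ^ k := by positivity
  have := Gb_nonneg q (by positivity : (0:ℝ) ≤ (k:ℝ)) k
  nlinarith

/-- two admissible choices landing in a dense set, with distinct outcomes -/
lemma exists_two {Ek : Set ℂ} (hden : Dense Ek) (v d : ℂ) (hd : d ≠ 0) {ε : ℝ} (hε : 0 < ε) :
    ∃ cc : Bool → ℂ, (∀ b, ‖cc b‖ ≤ ε ∧ v + cc b * d ∈ Ek) ∧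
      v + cc false * d ≠ v + cc true * d := by
  have hr : 0 < ε * ‖d‖ := mul_pos hε (norm_pos_iff.2 hd)
  obtain ⟨w₀, hw₀E, hw₀⟩ := hden.exists_mem_open isOpen_ball ⟨v, mem_ball_self hr⟩
  have hopen : IsOpen (ball v (ε * ‖d‖) \ {w₀}) :=
    isOpen_ball.sdiff isClosed_singleton
  have hne : (ball v (ε * ‖d‖) \ {w₀}).Nonempty := by
    by_cases hv : w₀ = v
    · refine ⟨v + (ε * ‖d‖ / 2 : ℝ), ?_, ?_⟩
      · rw [mem_ball, dist_eq_norm]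
        simp only [add_sub_cancel_left, Complex.norm_real, Real.norm_eq_abs,
          abs_of_pos (show (0:ℝ) < ε * ‖d‖ / 2 by linarith)]
        linarith
      · simp only [Set.mem_singleton_iff, hv]
        intro h
        have h2 : ((ε * ‖d‖ / 2 : ℝ) : ℂ) = 0 := by linear_combination h
        rw [Complex.ofReal_eq_zero] at h2
        linarith
    · exact ⟨v, ⟨mem_ball_self hr, by simpa using (Ne.symm hv)⟩⟩
  obtain ⟨w₁, hw₁E, hw₁⟩ := hden.exists_mem_open hopen hne
  have hdpos : 0 < ‖d‖ := norm_pos_iff.2 hd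
  have main : ∀ w ∈ ball v (ε * ‖d‖), ‖(w - v) * d⁻¹‖ ≤ ε ∧ v + (w - v) * d⁻¹ * d = w := by
    intro w hw
    have h1 : ‖w - v‖ < ε * ‖d‖ := by rw [← dist_eq_norm]; exact mem_ball.1 hw
    constructor
    · rw [norm_mul, norm_inv]
      rw [mul_inv_le_iff₀ hdpos]
      linarith
    · field_simp
      ring
  refine ⟨fun b => cond b ((w₁ - v) * d⁻¹) ((w₀ - v) * d⁻¹), ?_, ?_⟩
  · intro b
    cases b
    · exact ⟨(main w₀ hw₀).1, (main w₀ hw₀).2.symm ▸ hw₀E⟩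
    · exact ⟨(main w₁ hw₁.1).1, (main w₁ hw₁.1).2.symm ▸ hw₁E⟩
  · show v + (w₀ - v) * d⁻¹ * d ≠ v + (w₁ - v) * d⁻¹ * d
    rw [(main w₀ hw₀).2, (main w₁ hw₁.1).2]
    intro h
    exact hw₁.2 (by simp [h.symm])

variable (E' : ℂ → ℕ → Set ℂ)

def PP (c : ℕ → ℂ) (n : ℕ) : ℂ[X] := ∑ j ∈ Finset.range n, C (c j) * G q j

def VV (c : ℕ → ℂ) (k : ℕ) : ℂ := ((derivative (R := ℂ))^[mm q k] (PP q c k)).eval (q k)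

def dd (k : ℕ) : ℂ := ((derivative (R := ℂ))^[mm q k] (G q k)).eval (q k)

variable (hden : ∀ k, Dense (E' (q k) (mm q k)))

def stepfun (k : ℕ) (prev : ℕ → ℂ) : Bool → ℂ :=
  (exists_two (hden k) (VV q prev k) (dd q k) (dd_ne_zero q k) (eps_pos q k)).choose

lemma stepfun_spec (k : ℕ) (prev : ℕ → ℂ) :
    (∀ b, ‖stepfun q E' hden k prev b‖ ≤ eps q k ∧
      VV q prev k + stepfun q E' hden k prev b * dd q k ∈ E' (q k) (mm q k)) ∧
    VV q prev k + stepfun q E' hden k prev false * dd q k ≠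
      VV q prev k + stepfun q E' hden k prev true * dd q k :=
  (exists_two (hden k) (VV q prev k) (dd q k) (dd_ne_zero q k) (eps_pos q k)).choose_spec

def FF (σ : ℕ → Bool) : ℕ → (ℕ → ℂ)
  | 0 => fun _ => 0
  | (k+1) => Function.update (FF σ k) k (stepfun q E' hden k (FF σ k) (σ k))

def coeff (σ : ℕ → Bool) (k : ℕ) : ℂ := FF q E' hden σ (k+1) k

lemma FF_apply_of_lt (σ : ℕ → Bool) : ∀ {K k : ℕ}, k < K →
    FF q E' hden σ K k = coeff q E' hden σ k := by
  intro K
  induction K with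
  | zero => omega
  | succ K ih =>
    intro k hk
    rcases Nat.lt_or_ge k K with h | h
    · show Function.update (FF q E' hden σ K) K _ k = _
      rw [Function.update_of_ne (by omega)]
      exact ih h
    · have : k = K := by omega
      subst this
      rfl

lemma PP_FF (σ : ℕ → Bool) (k : ℕ) :
    PP q (FF q E' hden σ k) k = PP q (coeff q E' hden σ) k :=
  Finset.sum_congr rfl fun j hj => by
    rw [FF_apply_of_lt q E' hden σ (Finset.mem_range.1 hj)]

def Wv (σ : ℕ → Bool) (k : ℕ) : ℂ :=
  VV q (coeff q E' hden σ) k + coeff q E' hden σ k * dd q k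

lemma coeff_eq_step (σ : ℕ → Bool) (k : ℕ) :
    coeff q E' hden σ k = stepfun q E' hden k (FF q E' hden σ k) (σ k) := by
  show Function.update (FF q E' hden σ k) k _ k = _
  rw [Function.update_self]

lemma VV_FF (σ : ℕ → Bool) (k : ℕ) :
    VV q (coeff q E' hden σ) k = VV q (FF q E' hden σ k) k := by
  rw [VV, VV, PP_FF]

lemma coeff_norm_le (σ : ℕ → Bool) (k : ℕ) : ‖coeff q E' hden σ k‖ ≤ eps q k := by
  rw [coeff_eq_step]
  exact ((stepfun_spec q E' hden k _).1 (σ k)).1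

lemma W_mem (σ : ℕ → Bool) (k : ℕ) : Wv q E' hden σ k ∈ E' (q k) (mm q k) := by
  rw [Wv, coeff_eq_step, VV_FF]
  exact ((stepfun_spec q E' hden k _).1 (σ k)).2

lemma FF_congr (σ τ : ℕ → Bool) : ∀ {n : ℕ}, (∀ j, j < n → σ j = τ j) →
    FF q E' hden σ n = FF q E' hden τ n := by
  intro n
  induction n with
  | zero => intro _; rfl
  | succ n ih =>
    intro h
    show Function.update _ _ _ = Function.update _ _ _
    rw [ih (fun j hj => h j (by omega)), h n (by omega)]

lemma W_ne (σ τ : ℕ → Bool) (k : ℕ) (h : ∀ j, j < k → σ j = τ j) (hk : σ k ≠ τ k) :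
    Wv q E' hden σ k ≠ Wv q E' hden τ k := by
  have hFF := FF_congr q E' hden σ τ h
  rw [Wv, Wv, coeff_eq_step, coeff_eq_step, VV_FF, VV_FF, hFF]
  have hspec := (stepfun_spec q E' hden k (FF q E' hden τ k)).2
  cases hσ : σ k <;> cases hτ : τ k
  · exact absurd (hσ.trans hτ.symm) hk
  · exact hspec
  · exact hspec.symm
  · exact absurd (hσ.trans hτ.symm) hk

lemma iterate_derivative_PP (c : ℕ → ℂ) (n s : ℕ) :
    (derivative (R := ℂ))^[s] (PP q c n) =
      ∑ j ∈ Finset.range n, C (c j) * (derivative (R := ℂ))^[s] (G q j) := by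
  induction s with
  | zero => rfl
  | succ s ih =>
    rw [Function.iterate_succ_apply', ih, derivative_sum]
    exact Finset.sum_congr rfl fun j _ => by
      rw [derivative_C_mul, Function.iterate_succ_apply']

lemma eval_freeze (σ : ℕ → Bool) {k N : ℕ} (h : k < N) :
    ((derivative (R := ℂ))^[mm q k] (PP q (coeff q E' hden σ) N)).eval (q k) =
      Wv q E' hden σ k := by
  rw [iterate_derivative_PP, eval_finset_sum]
  simp only [eval_mul, eval_C]
  have hz : ∀ j ∈ Finset.range N, j ∉ Finset.range (k+1) →
      coeff q E' hden σ j * ((derivative (R := ℂ))^[mm q k] (G q j)).eval (q k) = 0 := by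
    intro j _ hj
    have hkj : k < j := by simp only [Finset.mem_range, not_lt] at hj; omega
    rw [iterate_derivative_G_eval_zero q hkj, mul_zero]
  rw [← Finset.sum_subset (Finset.range_subset_range.2 h) hz]
  rw [Finset.sum_range_succ]
  have hVV : VV q (coeff q E' hden σ) k = ∑ j ∈ Finset.range k,
      coeff q E' hden σ j * ((derivative (R := ℂ))^[mm q k] (G q j)).eval (q k) := by
    rw [VV, iterate_derivative_PP, eval_finset_sum]
    simp only [eval_mul, eval_C]
  unfold Wv dd
  rw [hVV]

lemma iteratedDeriv_eval (p : ℂ[X]) (s : ℕ) :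
    iteratedDeriv s (fun z => p.eval z) = fun z => ((derivative (R := ℂ))^[s] p).eval z := by
  induction s with
  | zero => simp [iteratedDeriv_zero]
  | succ s ih =>
    rw [iteratedDeriv_succ, ih]
    funext z
    rw [Function.iterate_succ_apply']
    exact Polynomial.deriv _

def maj (σ : ℕ → Bool) (R : ℝ) (k : ℕ) : ℝ :=
  if k < ⌈R⌉₊ then ‖coeff q E' hden σ k‖ * Gb q R k else (2:ℝ)⁻¹ ^ k

lemma summable_maj (σ : ℕ → Bool) (R : ℝ) : Summable (maj q E' hden σ R) := by
  rw [← summable_nat_add_iff ⌈R⌉₊]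
  have heq : (fun n => maj q E' hden σ R (n + ⌈R⌉₊)) = fun n => (2:ℝ)⁻¹ ^ (n + ⌈R⌉₊) := by
    funext n
    rw [maj, if_neg (by omega)]
  rw [heq]
  have : Summable (fun n : ℕ => (2:ℝ)⁻¹ ^ n) :=
    summable_geometric_of_lt_one (by norm_num) (by norm_num)
  simpa [pow_add] using this.mul_right ((2:ℝ)⁻¹ ^ ⌈R⌉₊)

lemma maj_bound (σ : ℕ → Bool) (R : ℝ) :
    ∀ k, ∀ z ∈ ball (0:ℂ) R, ‖coeff q E' hden σ k * (G q k).eval z‖ ≤ maj q E' hden σ R k := by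
  intro k z hz
  have hzR : ‖z‖ < R := by simpa [dist_zero_right] using mem_ball.1 hz
  have hR0 : 0 ≤ R := le_of_lt (lt_of_le_of_lt (norm_nonneg z) hzR)
  rw [norm_mul, maj]
  by_cases hk : k < ⌈R⌉₊
  · rw [if_pos hk]
    exact mul_le_mul_of_nonneg_left (eval_G_le q hR0 hzR.le k) (norm_nonneg _)
  · rw [if_neg hk]
    have hRk : R ≤ (k:ℝ) := le_trans (Nat.le_ceil R) (by exact_mod_cast not_lt.1 hk)
    calc ‖coeff q E' hden σ k‖ * ‖(G q k).eval z‖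
        ≤ eps q k * Gb q (k:ℝ) k :=
          mul_le_mul (coeff_norm_le q E' hden σ k)
            (le_trans (eval_G_le q hR0 hzR.le k) (Gb_mono q hR0 hRk k))
            (norm_nonneg _) (le_of_lt (eps_pos q k))
      _ ≤ (2:ℝ)⁻¹ ^ k := eps_mul_Gb_le q k

def ff (σ : ℕ → Bool) (z : ℂ) : ℂ := ∑' k, coeff q E' hden σ k * (G q k).eval z

lemma eval_PP (c : ℕ → ℂ) (n : ℕ) (z : ℂ) :
    (PP q c n).eval z = ∑ k ∈ Finset.range n, c k * (G q k).eval z := by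
  rw [PP, eval_finset_sum]
  simp [eval_mul, eval_C]

lemma tendsto_unif (σ : ℕ → Bool) (R : ℝ) :
    TendstoUniformlyOn (fun N z => (PP q (coeff q E' hden σ) N).eval z)
      (ff q E' hden σ) atTop (ball (0:ℂ) R) := by
  have h := tendstoUniformlyOn_tsum_nat (summable_maj q E' hden σ R) (maj_bound q E' hden σ R)
  have heq : (fun (N : ℕ) (z : ℂ) => ∑ k ∈ Finset.range N, coeff q E' hden σ k * (G q k).eval z)
      = fun N z => (PP q (coeff q E' hden σ) N).eval z := by
    funext N z
    rw [eval_PP]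
  rw [heq] at h
  exact h

lemma tlu_iteratedDeriv (σ : ℕ → Bool) (R : ℝ) (s : ℕ) :
    TendstoLocallyUniformlyOn
      (fun N => iteratedDeriv s (fun z => (PP q (coeff q E' hden σ) N).eval z))
      (iteratedDeriv s (ff q E' hden σ)) atTop (ball (0:ℂ) R) := by
  induction s with
  | zero =>
    simpa [iteratedDeriv_zero] using
      (tendsto_unif q E' hden σ R).tendstoLocallyUniformlyOn
  | succ s ih =>
    have hdiff : ∀ N : ℕ, DifferentiableOn ℂ
        (iteratedDeriv s (fun z => (PP q (coeff q E' hden σ) N).eval z)) (ball (0:ℂ) R) := by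
      intro N
      rw [iteratedDeriv_eval]
      exact (Polynomial.differentiable _).differentiableOn
    have := ih.deriv (Eventually.of_forall hdiff) isOpen_ball
    simpa [iteratedDeriv_succ, Function.comp_def] using this

lemma iteratedDeriv_ff (σ : ℕ → Bool) (k : ℕ) :
    iteratedDeriv (mm q k) (ff q E' hden σ) (q k) = Wv q E' hden σ k := by
  set R : ℝ := ‖q k‖ + 1 with hR
  have hqk : q k ∈ ball (0:ℂ) R := by
    simp only [mem_ball, dist_zero_right, hR]
    linarith
  have h1 := (tlu_iteratedDeriv q E' hden σ R (mm q k)).tendsto_at hqk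
  have h2 : ∀ N, k < N →
      iteratedDeriv (mm q k) (fun z => (PP q (coeff q E' hden σ) N).eval z) (q k)
        = Wv q E' hden σ k := by
    intro N hN
    rw [iteratedDeriv_eval]
    exact eval_freeze q E' hden σ hN
  have h3 : Tendsto (fun N => iteratedDeriv (mm q k)
      (fun z => (PP q (coeff q E' hden σ) N).eval z) (q k)) atTop
      (𝓝 (Wv q E' hden σ k)) := by
    apply Tendsto.congr' _ tendsto_const_nhds
    filter_upwards [eventually_ge_atTop (k+1)] with N hN
    exact (h2 N (by omega)).symm
  exact tendsto_nhds_unique h1 h3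

lemma ff_differentiable (σ : ℕ → Bool) : Differentiable ℂ (ff q E' hden σ) := by
  intro z
  have hball : z ∈ ball (0:ℂ) (‖z‖+1) := by
    simp only [mem_ball, dist_zero_right]
    linarith
  have hd := Complex.differentiableOn_tsum_of_summable_norm (summable_maj q E' hden σ (‖z‖+1))
    (fun k => (((G q k).differentiable).const_mul _).differentiableOn)
    isOpen_ball (maj_bound q E' hden σ (‖z‖+1))
  exact hd.differentiableAt (isOpen_ball.mem_nhds hball)

end AuxBS
end AuxBS

theorem stmt_1 (A : Set ℂ) (hA : A.Countable)
    (E : ℂ → ℕ → Set ℂ) (hE : ∀ α ∈ A, ∀ s : ℕ, Dense (E α s)) :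
    ¬ Set.Countable {f : ℂ → ℂ | Differentiable ℂ f ∧
        (∀ p : Polynomial ℂ, f ≠ fun z => p.eval z) ∧
        ∀ α ∈ A, ∀ s : ℕ, iteratedDeriv s f α ∈ E α s} := by
  intro hS
  -- a point outside `A`
  obtain ⟨β, hβ⟩ : ∃ β : ℂ, β ∉ A := by
    by_contra h
    push_neg at h
    have huniv : (Set.univ : Set ℂ).Countable := hA.mono fun x _ => h x
    haveI : Countable ℂ := Set.countable_univ_iff.mp huniv
    haveI : Countable ℝ := Complex.ofReal_injective.countable
    exact Cardinal.not_countable_real Set.countable_univ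
  have hA'c : (insert β A).Countable := hA.insert β
  obtain ⟨u, hu⟩ := hA'c.exists_eq_range (Set.insert_nonempty β A)
  set q : ℕ → ℂ := fun k => u (Nat.unpair k).1 with hq
  have hfib : ∀ i : ℕ, {j | q j = u i}.Infinite := by
    intro i
    apply Set.infinite_of_injective_forall_mem (f := fun n : ℕ => Nat.pair i n)
    · intro a b hab
      have := congrArg (fun x => (Nat.unpair x).2) hab
      simpa [Nat.unpair_pair] using this
    · intro n
      simp [hq, Nat.unpair_pair]
  have hmemq : ∀ k, q k ∈ insert β A := fun k => by rw [hu]; exact ⟨_, rfl⟩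
  set E' : ℂ → ℕ → Set ℂ := fun α s => if α = β then {(0:ℂ)}ᶜ else E α s with hE'
  have hden : ∀ k, Dense (E' (q k) (AuxBS.mm q k)) := by
    intro k
    show Dense (if q k = β then {(0:ℂ)}ᶜ else E (q k) (AuxBS.mm q k))
    by_cases hqk : q k = β
    · rw [if_pos hqk]
      exact dense_compl_singleton 0
    · rw [if_neg hqk]
      have hmem := hmemq k
      rw [Set.mem_insert_iff] at hmem
      rcases hmem with h | h
      · exact absurd h hqk
      · exact hE _ h _
  have hpair : ∀ α ∈ insert β A, ∀ s : ℕ, ∃ k, q k = α ∧ AuxBS.mm q k = s := by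
    intro α hα s
    have : α ∈ Set.range u := by rw [← hu]; exact hα
    obtain ⟨i, rfl⟩ := this
    exact AuxBS.mm_surj q (hfib i) s
  set S := {f : ℂ → ℂ | Differentiable ℂ f ∧
      (∀ p : Polynomial ℂ, f ≠ fun z => p.eval z) ∧
      ∀ α ∈ A, ∀ s : ℕ, iteratedDeriv s f α ∈ E α s} with hSdef
  have hmem : ∀ σ : ℕ → Bool, AuxBS.ff q E' hden σ ∈ S := by
    intro σ
    refine ⟨AuxBS.ff_differentiable q E' hden σ, ?_, ?_⟩
    · intro p hp
      obtain ⟨k, hk1, hk2⟩ := hpair β (Set.mem_insert β A) (p.natDegree + 1)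
      have hW := AuxBS.W_mem q E' hden σ k
      rw [← AuxBS.iteratedDeriv_ff q E' hden σ k] at hW
      rw [hp, hk1, hk2] at hW
      have hWE : iteratedDeriv (p.natDegree + 1) (fun z => p.eval z) β ∈ ({(0:ℂ)}ᶜ : Set ℂ) := by
        have : E' β (p.natDegree + 1) = ({(0:ℂ)}ᶜ : Set ℂ) := by
          show (if β = β then {(0:ℂ)}ᶜ else E β (p.natDegree + 1)) = _
          rw [if_pos rfl]
        rwa [this] at hW
      rw [AuxBS.iteratedDeriv_eval] at hWE
      rw [Polynomial.iterate_derivative_eq_zero (by omega)] at hWE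
      simp at hWE
    · intro α hα s
      obtain ⟨k, hk1, hk2⟩ := hpair α (Set.mem_insert_of_mem β hα) s
      have hW := AuxBS.W_mem q E' hden σ k
      rw [← AuxBS.iteratedDeriv_ff q E' hden σ k] at hW
      rw [hk1, hk2] at hW
      have hαβ : α ≠ β := fun h => hβ (h ▸ hα)
      have : E' α s = E α s := by
        show (if α = β then {(0:ℂ)}ᶜ else E α s) = _
        rw [if_neg hαβ]
      rwa [this] at hW
  have hinj : Function.Injective (AuxBS.ff q E' hden) := by
    intro σ τ hfeq
    by_contra hne
    have hex : ∃ j, σ j ≠ τ j := Function.ne_iff.1 hne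
    have hk : σ (Nat.find hex) ≠ τ (Nat.find hex) := Nat.find_spec hex
    have hlt : ∀ j, j < Nat.find hex → σ j = τ j := fun j hj =>
      not_not.1 (Nat.find_min hex hj)
    apply AuxBS.W_ne q E' hden σ τ (Nat.find hex) hlt hk
    rw [← AuxBS.iteratedDeriv_ff q E' hden σ, ← AuxBS.iteratedDeriv_ff q E' hden τ, hfeq]
  haveI := hS.to_subtype
  have hinj2 : Function.Injective (fun σ : ℕ → Bool => (⟨AuxBS.ff q E' hden σ, hmem σ⟩ : S)) := by
    intro σ τ h
    exact hinj (congrArg Subtype.val h)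
  haveI : Countable (ℕ → Bool) := hinj2.countable
  have hinj3 : Function.Injective (fun (s : Set ℕ) (n : ℕ) => decide (n ∈ s)) := by
    intro s t h
    ext n
    have := congrFun h n
    simpa using this
  haveI : Countable (Set ℕ) := hinj3.countable
  obtain ⟨g, hg⟩ := Countable.exists_injective_nat (Set ℕ)
  exact Function.cantor_injective g hg
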